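/- Let V be a vector space over a field k with a square-zero endomorphism d and a bilinear alternating bracket ℓ₂ satisfying the Leibniz rule with respect to d. Suppose there exists a trilinear map ℓ₃ : V×V×V → V such that the Jacobiator of ℓ₂ equals d ∘ ℓ₃ + ℓ₃ applied with d in each slot (i.e., J(x,y,z) = d(ℓ₃(x,y,z)) + ℓ₃(dx,y,z) + ℓ₃(x,dy,z) + ℓ₃(x,y,dz)). Then the induced bracket on homology H = ker d / im d satisfies the Jacobi identity, so H is a Lie algebra. -/
import Mathlib


/-- If the Jacobiator of `ℓ₂` is a homotopy boundary via `ℓ₃`, then the bracket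
induced on homology `ker d / im d` is alternating and satisfies the Jacobi
identity, so homology is a Lie algebra. -/
theorem stmt12 (k : Type*) [Field k] (V : Type*) [AddCommGroup V] [Module k V]
    (d : V →ₗ[k] V) (hd : d ∘ₗ d = 0)
    (l2 : V →ₗ[k] V →ₗ[k] V) (halt : ∀ x : V, l2 x x = 0)
    (hchain : ∀ x y : V, d (l2 x y) = l2 (d x) y + l2 x (d y))
    (l3 : V →ₗ[k] V →ₗ[k] V →ₗ[k] V)
    (hhty : ∀ x y z : V,
      l2 (l2 x y) z + l2 (l2 y z) x + l2 (l2 z x) y =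
        d (l3 x y z) + l3 (d x) y z + l3 x (d y) z + l3 x y (d z)) :
    ∃ Br : ((LinearMap.ker d) ⧸ (LinearMap.range d).comap (LinearMap.ker d).subtype) →ₗ[k]
        ((LinearMap.ker d) ⧸ (LinearMap.range d).comap (LinearMap.ker d).subtype) →ₗ[k]
        ((LinearMap.ker d) ⧸ (LinearMap.range d).comap (LinearMap.ker d).subtype),
      (∀ (x y : LinearMap.ker d) (hxy : l2 (x : V) (y : V) ∈ LinearMap.ker d),
        Br (Submodule.Quotient.mk x) (Submodule.Quotient.mk y) =
          Submodule.Quotient.mk ⟨l2 (x : V) (y : V), hxy⟩) ∧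
      (∀ u, Br u u = 0) ∧
      (∀ u v w, Br (Br u v) w + Br (Br v w) u + Br (Br w u) v = 0) := by
  set K := LinearMap.ker d with hK
  set S : Submodule k K := (LinearMap.range d).comap K.subtype with hS
  have hker : ∀ x y : K, l2 (x : V) (y : V) ∈ LinearMap.ker d := by
    intro x y
    have hx : d (x : V) = 0 := x.2
    have hy : d (y : V) = 0 := y.2
    simp [LinearMap.mem_ker, hchain, hx, hy]
  let B : K →ₗ[k] K →ₗ[k] K := LinearMap.mk₂ k
    (fun x y => ⟨l2 (x : V) (y : V), hker x y⟩)
    (by intro x x' y; apply Subtype.ext; simp)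
    (by intro c x y; apply Subtype.ext; simp)
    (by intro x y y'; apply Subtype.ext; simp)
    (by intro c x y; apply Subtype.ext; simp)
  have hBval : ∀ x y : K, ((B x y : V)) = l2 (x : V) (y : V) := fun _ _ => rfl
  have hmemS : ∀ s : K, s ∈ S ↔ (s : V) ∈ LinearMap.range d := fun s => Iff.rfl
  -- S is an "ideal" for B in each slot
  have hright : ∀ (x s : K), s ∈ S → B x s ∈ S := by
    intro x s hs
    obtain ⟨a, ha⟩ := (hmemS s).1 hs
    refine (hmemS _).2 ⟨l2 (x : V) a, ?_⟩
    have hx : d (x : V) = 0 := x.2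
    rw [hBval, ← ha, hchain (x : V) a, hx]
    simp
  have hleft : ∀ (s y : K), s ∈ S → B s y ∈ S := by
    intro s y hs
    obtain ⟨a, ha⟩ := (hmemS s).1 hs
    refine (hmemS _).2 ⟨l2 a (y : V), ?_⟩
    have hy : d (y : V) = 0 := y.2
    rw [hBval, ← ha, hchain a (y : V), hy]
    simp
  -- the map on the second factor
  let C : K →ₗ[k] (K ⧸ S) →ₗ[k] (K ⧸ S) :=
    { toFun := fun x => Submodule.mapQ S S (B x) (fun s hs => hright x s hs)
      map_add' := by
        intro x y
        apply Submodule.linearMap_qext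
        ext s
        simp [Submodule.mapQ_apply]
      map_smul' := by
        intro c x
        apply Submodule.linearMap_qext
        ext s
        simp [Submodule.mapQ_apply] }
  have hC : ∀ (x y : K), C x (Submodule.Quotient.mk y) = Submodule.Quotient.mk (B x y) :=
    fun x y => rfl
  let Br : (K ⧸ S) →ₗ[k] (K ⧸ S) →ₗ[k] (K ⧸ S) :=
    Submodule.liftQ S C (by
      intro s hs
      apply Submodule.linearMap_qext
      ext y
      simp only [LinearMap.comp_apply, Submodule.mkQ_apply, LinearMap.zero_comp,
        LinearMap.zero_apply]
      rw [hC]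
      exact (Submodule.Quotient.mk_eq_zero S).2 (hleft s y hs))
  have hBr : ∀ x y : K, Br (Submodule.Quotient.mk x) (Submodule.Quotient.mk y)
      = Submodule.Quotient.mk (B x y) := fun x y => rfl
  refine ⟨Br, ?_, ?_, ?_⟩
  · intro x y hxy
    rw [hBr]
    exact congrArg _ (Subtype.ext rfl)
  · intro u
    induction u using Submodule.Quotient.induction_on with
    | H x =>
      rw [hBr]
      have h0 : B x x = 0 := Subtype.ext (halt (x : V))
      rw [h0, Submodule.Quotient.mk_zero]
  · intro u v w
    induction u using Submodule.Quotient.induction_on with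
    | H x =>
    induction v using Submodule.Quotient.induction_on with
    | H y =>
    induction w using Submodule.Quotient.induction_on with
    | H z =>
      rw [hBr, hBr, hBr, hBr, hBr, hBr]
      rw [← Submodule.Quotient.mk_add, ← Submodule.Quotient.mk_add]
      apply (Submodule.Quotient.mk_eq_zero S).2
      refine (hmemS _).2 ⟨l3 (x : V) (y : V) (z : V), ?_⟩
      have hx : d (x : V) = 0 := x.2
      have hy : d (y : V) = 0 := y.2
      have hz : d (z : V) = 0 := z.2
      have := hhty (x : V) (y : V) (z : V)
      rw [hx, hy, hz] at this
      simp only [map_zero, LinearMap.zero_apply, add_zero] at this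
      push_cast
      simp only [hBval]
      exact this.symm
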